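/- Posterior trace bound near time zero for the OU process: let y_t = e^{−t} y₀ + σ_t z with z standard Gaussian, and let Σ_t denote the posterior covariance Cov(y₀ | y_t). Then for every t ≥ 0, E[Tr(Σ_t)] ≤ d·(e^{2t} − 1); in particular, for t ∈ [0,1], E[Tr(Σ_t)] ≤ 2 d e² t. -/

import Mathlib

open MeasureTheory Real

noncomputable section

variable {d : ℕ}

/-- The OU variance `σ_t² = 1 − e^{−2t}`. -/
def sigSq (t : ℝ) : ℝ := 1 - Real.exp (-2 * t)

/-- The OU transition kernel `N(y; e^{−t} y₀, σ_t² I)`. -/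
def ouKernel (t : ℝ) (y y₀ : EuclideanSpace ℝ (Fin d)) : ℝ :=
  (2 * π * sigSq t) ^ (-(d : ℝ) / 2) *
    Real.exp (-‖y - Real.exp (-t) • y₀‖ ^ 2 / (2 * sigSq t))

/-- The OU-smoothed density at time `t`. -/
def ouDensity (q₀ : EuclideanSpace ℝ (Fin d) → ℝ) (t : ℝ)
    (y : EuclideanSpace ℝ (Fin d)) : ℝ :=
  ∫ y₀, q₀ y₀ * ouKernel t y y₀

/-- The posterior mean `μ_t(y) = E[y₀ | y_t = y]`. -/
def postMean (q₀ : EuclideanSpace ℝ (Fin d) → ℝ) (t : ℝ)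
    (y : EuclideanSpace ℝ (Fin d)) : EuclideanSpace ℝ (Fin d) :=
  (ouDensity q₀ t y)⁻¹ • ∫ y₀, (q₀ y₀ * ouKernel t y y₀) • y₀

/-- The posterior covariance `Σ_t(y) = Cov(y₀ | y_t = y)`, as a matrix. -/
def postCov (q₀ : EuclideanSpace ℝ (Fin d) → ℝ) (t : ℝ)
    (y : EuclideanSpace ℝ (Fin d)) (i j : Fin d) : ℝ :=
  (ouDensity q₀ t y)⁻¹ * (∫ y₀, q₀ y₀ * ouKernel t y y₀ * (y₀ i * y₀ j))
    - postMean q₀ t y i * postMean q₀ t y j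

variable {V : Type*} [NormedAddCommGroup V] [InnerProductSpace ℝ V]
  [FiniteDimensional ℝ V] [MeasurableSpace V] [BorelSpace V]

lemma integrable_rexp_neg_mul_sq_norm' {b : ℝ} (hb : 0 < b) :
    Integrable (fun v : V => rexp (-b * ‖v‖ ^ 2)) := by
  have := (GaussianFourier.integrable_cexp_neg_mul_sq_norm_add
    (V := V) (b := (b : ℂ)) (by simpa using hb) 0 0).norm
  refine this.congr (Filter.Eventually.of_forall fun v => ?_)
  show ‖Complex.exp _‖ = _
  rw [Complex.norm_exp]
  norm_num
  left
  norm_cast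

lemma sq_mul_rexp_le {b u : ℝ} (hb : 0 < b) (hu : 0 ≤ u) :
    u * rexp (-b * u) ≤ (2 / b) * rexp (-(b/2) * u) := by
  have h2 : rexp (-b * u) = rexp (-(b/2) * u) * rexp (-(b/2) * u) := by
    rw [← Real.exp_add]; ring_nf
  rw [h2, ← mul_assoc]
  apply mul_le_mul_of_nonneg_right _ (Real.exp_pos _).le
  have h1 : (b/2) * u + 1 ≤ rexp ((b/2) * u) := Real.add_one_le_exp _
  have h3 : rexp (-(b/2) * u) = (rexp ((b/2) * u))⁻¹ := by
    rw [← Real.exp_neg]; ring_nf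
  rw [h3]
  have hpos := Real.exp_pos ((b/2) * u)
  rw [mul_inv_le_iff₀ hpos, div_mul_eq_mul_div, le_div_iff₀ hb]
  nlinarith

lemma integrable_norm_sq_mul_rexp {b : ℝ} (hb : 0 < b) :
    Integrable (fun v : V => ‖v‖ ^ 2 * rexp (-b * ‖v‖ ^ 2)) := by
  refine Integrable.mono' ((integrable_rexp_neg_mul_sq_norm' (V := V) (show (0:ℝ) < b/2 by linarith)).const_mul (2/b)) ?_ (Filter.Eventually.of_forall fun v => ?_)
  · apply Continuous.aestronglyMeasurable; fun_prop
  · rw [Real.norm_eq_abs, abs_of_nonneg (by positivity)]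
    exact sq_mul_rexp_le hb (by positivity)

lemma integral_norm_sq_mul_rexp {b : ℝ} (hb : 0 < b) :
    ∫ v : V, ‖v‖ ^ 2 * rexp (-b * ‖v‖ ^ 2)
      = ((Module.finrank ℝ V : ℝ) / 2) / b * (π / b) ^ ((Module.finrank ℝ V : ℝ) / 2) := by
  set c : ℝ := (Module.finrank ℝ V : ℝ) / 2 with hc
  have hder : HasDerivAt (fun x : ℝ => ∫ v : V, rexp (-x * ‖v‖ ^ 2))
      (∫ v : V, -(‖v‖ ^ 2 * rexp (-b * ‖v‖ ^ 2))) b := by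
    have := hasDerivAt_integral_of_dominated_loc_of_deriv_le
      (F := fun x (v : V) => rexp (-x * ‖v‖ ^ 2))
      (F' := fun x (v : V) => -(‖v‖ ^ 2 * rexp (-x * ‖v‖ ^ 2)))
      (x₀ := b) (s := Metric.ball b (b / 2)) (bound := fun v => ‖v‖ ^ 2 * rexp (-(b/2) * ‖v‖ ^ 2))
      (Metric.ball_mem_nhds _ (by linarith))
      (Filter.Eventually.of_forall fun x =>
        (Continuous.aestronglyMeasurable (by fun_prop)))
      (integrable_rexp_neg_mul_sq_norm' hb)
      (Continuous.aestronglyMeasurable (by fun_prop))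
      (Filter.Eventually.of_forall fun v => fun x hx => ?_)
      (integrable_norm_sq_mul_rexp (by linarith))
      (Filter.Eventually.of_forall fun v => fun x hx => ?_)
    · exact this.2
    · rw [Real.norm_eq_abs, abs_of_nonpos (neg_nonpos.2 (by positivity)), neg_neg]
      apply mul_le_mul_of_nonneg_left _ (by positivity)
      apply Real.exp_le_exp.2
      have : b / 2 < x := by
        rw [Metric.mem_ball, Real.dist_eq, abs_lt] at hx; linarith
      nlinarith [sq_nonneg ‖v‖]
    · have h1 : HasDerivAt (fun x : ℝ => -x * ‖v‖ ^ 2) (-‖v‖ ^ 2) x := by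
        simpa using ((hasDerivAt_id x).neg.mul_const (‖v‖ ^ 2))
      simpa [mul_comm, mul_assoc, mul_left_comm] using h1.exp
  have heq : (fun x : ℝ => ∫ v : V, rexp (-x * ‖v‖ ^ 2))
      =ᶠ[nhds b] fun x => (π / x) ^ c := by
    filter_upwards [eventually_gt_nhds hb] with x hx
    rw [GaussianFourier.integral_rexp_neg_mul_sq_norm hx]
  have hder2 : HasDerivAt (fun x : ℝ => (π / x) ^ c)
      (-π / b ^ 2 * c * (π / b) ^ (c - 1)) b := by
    have h1 : HasDerivAt (fun x : ℝ => π / x) (-π / b ^ 2) b := by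
      simpa [div_eq_mul_inv] using (hasDerivAt_inv hb.ne').const_mul π
    exact h1.rpow_const (Or.inl (ne_of_gt (div_pos pi_pos hb)))
  have h3 : HasDerivAt (fun x : ℝ => (π / x) ^ c)
      (∫ v : V, -(‖v‖ ^ 2 * rexp (-b * ‖v‖ ^ 2))) b := hder.congr_of_eventuallyEq heq.symm
  have h4 := h3.unique hder2
  rw [integral_neg] at h4
  have h5 : (π / b) ^ (c - 1) * (π / b) = (π / b) ^ c := by
    rw [← Real.rpow_add_one (by positivity)]; ring_nf
  have h6 : ∫ v : V, ‖v‖ ^ 2 * rexp (-b * ‖v‖ ^ 2) = π / b ^ 2 * c * (π / b) ^ (c - 1) := by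
    linear_combination -h4
  rw [h6, ← h5]
  field_simp

lemma sigSq_pos {t : ℝ} (ht : 0 < t) : 0 < sigSq t := by
  have : rexp (-2 * t) < 1 := by
    rw [Real.exp_lt_one_iff]; linarith
  simp [sigSq]; linarith

lemma ouKernel_nonneg {t : ℝ} (ht : 0 ≤ sigSq t) (y y₀ : EuclideanSpace ℝ (Fin d)) :
    0 ≤ ouKernel t y y₀ := by
  unfold ouKernel
  apply mul_nonneg _ (Real.exp_pos _).le
  apply Real.rpow_nonneg
  have : (0:ℝ) ≤ 2 * π := by positivity
  nlinarith

lemma ouKernel_le {t : ℝ} (ht : 0 < sigSq t) (y y₀ : EuclideanSpace ℝ (Fin d)) :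
    ouKernel t y y₀ ≤ (2 * π * sigSq t) ^ (-(d : ℝ) / 2) := by
  unfold ouKernel
  have h1 : rexp (-‖y - rexp (-t) • y₀‖ ^ 2 / (2 * sigSq t)) ≤ 1 := by
    apply Real.exp_le_one_iff.2
    apply div_nonpos_of_nonpos_of_nonneg (neg_nonpos.2 (by positivity)) (by positivity)
  have h2 : (0:ℝ) ≤ (2 * π * sigSq t) ^ (-(d : ℝ) / 2) := by positivity
  nlinarith

lemma ouKernel_eq {t : ℝ} (ht : 0 < sigSq t) (y y₀ : EuclideanSpace ℝ (Fin d)) :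
    ouKernel t y y₀ = (2 * π * sigSq t) ^ (-(d : ℝ) / 2) *
      rexp (-(1 / (2 * sigSq t)) * ‖y - Real.exp (-t) • y₀‖ ^ 2) := by
  unfold ouKernel
  congr 1
  congr 1
  field_simp

lemma continuous_ouKernel (t : ℝ) :
    Continuous (fun p : EuclideanSpace ℝ (Fin d) × EuclideanSpace ℝ (Fin d) =>
      ouKernel t p.1 p.2) := by
  unfold ouKernel
  fun_prop

lemma kernel_moment_integrable {t : ℝ} (ht : 0 < sigSq t) (y₀ : EuclideanSpace ℝ (Fin d)) :
    Integrable (fun y : EuclideanSpace ℝ (Fin d) =>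
      ouKernel t y y₀ * ‖y - Real.exp (-t) • y₀‖ ^ 2) := by
  have hb : (0:ℝ) < 1 / (2 * sigSq t) := by positivity
  have h := ((integrable_norm_sq_mul_rexp (V := EuclideanSpace ℝ (Fin d)) hb).const_mul
    ((2 * π * sigSq t) ^ (-(d : ℝ) / 2))).comp_sub_right (Real.exp (-t) • y₀)
  refine h.congr (Filter.Eventually.of_forall fun y => ?_)
  show (2 * π * sigSq t) ^ (-(d : ℝ) / 2) *
      (‖y - rexp (-t) • y₀‖ ^ 2 * rexp (-(1 / (2 * sigSq t)) * ‖y - rexp (-t) • y₀‖ ^ 2))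
    = ouKernel t y y₀ * ‖y - rexp (-t) • y₀‖ ^ 2
  rw [ouKernel_eq ht]
  ring

lemma kernel_moment {t : ℝ} (ht : 0 < sigSq t) (y₀ : EuclideanSpace ℝ (Fin d)) :
    ∫ y : EuclideanSpace ℝ (Fin d), ouKernel t y y₀ * ‖y - Real.exp (-t) • y₀‖ ^ 2
      = d * sigSq t := by
  have hb : (0:ℝ) < 1 / (2 * sigSq t) := by positivity
  calc ∫ y : EuclideanSpace ℝ (Fin d), ouKernel t y y₀ * ‖y - Real.exp (-t) • y₀‖ ^ 2
      = ∫ y : EuclideanSpace ℝ (Fin d), (2 * π * sigSq t) ^ (-(d : ℝ) / 2) *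
          (‖y - Real.exp (-t) • y₀‖ ^ 2 * rexp (-(1/(2 * sigSq t)) * ‖y - Real.exp (-t) • y₀‖ ^ 2)) := by
        congr 1; funext y; rw [ouKernel_eq ht]; ring
    _ = (2 * π * sigSq t) ^ (-(d : ℝ) / 2) *
          ∫ y : EuclideanSpace ℝ (Fin d), ‖y - Real.exp (-t) • y₀‖ ^ 2 *
            rexp (-(1/(2 * sigSq t)) * ‖y - Real.exp (-t) • y₀‖ ^ 2) := integral_const_mul _ _
    _ = (2 * π * sigSq t) ^ (-(d : ℝ) / 2) *
          ∫ v : EuclideanSpace ℝ (Fin d), ‖v‖ ^ 2 * rexp (-(1/(2 * sigSq t)) * ‖v‖ ^ 2) := by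
        rw [integral_sub_right_eq_self
          (fun v : EuclideanSpace ℝ (Fin d) => ‖v‖ ^ 2 * rexp (-(1/(2 * sigSq t)) * ‖v‖ ^ 2))
          (Real.exp (-t) • y₀)]
    _ = d * sigSq t := by
        rw [integral_norm_sq_mul_rexp hb, finrank_euclideanSpace]
        have h1 : π / (1 / (2 * sigSq t)) = 2 * π * sigSq t := by field_simp
        rw [h1]
        have h2 : (2 * π * sigSq t) ^ (-(d : ℝ) / 2) * (2 * π * sigSq t) ^ ((d : ℝ) / 2) = 1 := by
          rw [← Real.rpow_add (by positivity)]
          have : (-(d:ℝ)/2 + (d:ℝ)/2) = 0 := by ring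
          rw [this, Real.rpow_zero]
        have hcard : ((Fintype.card (Fin d) : ℝ)) = (d : ℝ) := by simp
        rw [hcard]
        have h3 : ((d:ℝ)/2) / (1/(2 * sigSq t)) = d * sigSq t := by field_simp
        calc (2 * π * sigSq t) ^ (-(d : ℝ) / 2) *
              (((d:ℝ)/2) / (1/(2 * sigSq t)) * (2 * π * sigSq t) ^ ((d : ℝ) / 2))
            = ((2 * π * sigSq t) ^ (-(d : ℝ) / 2) * (2 * π * sigSq t) ^ ((d : ℝ) / 2)) *
              (((d:ℝ)/2) / (1/(2 * sigSq t))) := by ring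
          _ = d * sigSq t := by rw [h2, h3, one_mul]

section Pointwise

variable {q₀ : EuclideanSpace ℝ (Fin d) → ℝ} (hq0 : ∀ y, 0 ≤ q₀ y) (hmeas : Measurable q₀)
  (hq_int : Integrable q₀) (hmom : Integrable (fun y => q₀ y * ‖y‖ ^ 2))
  {t : ℝ} (hs : 0 < sigSq t)

open scoped RealInnerProductSpace

lemma coord_sq_le {x : EuclideanSpace ℝ (Fin d)} (i : Fin d) : x i * x i ≤ ‖x‖ ^ 2 := by
  rw [PiLp.norm_sq_eq_of_L2 (fun _ : Fin d => ℝ) x]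
  have : x i * x i = ‖x i‖ ^ 2 := by rw [Real.norm_eq_abs, sq_abs]; ring
  rw [this]
  exact Finset.single_le_sum (f := fun j => ‖x j‖ ^ 2) (fun j _ => by positivity) (Finset.mem_univ i)

lemma norm_sq_eq_sum {x : EuclideanSpace ℝ (Fin d)} : ‖x‖ ^ 2 = ∑ i, x i * x i := by
  rw [PiLp.norm_sq_eq_of_L2 (fun _ : Fin d => ℝ) x]
  congr 1; funext i; rw [Real.norm_eq_abs, sq_abs]; ring

include hq0 hmeas hq_int hmom hs in
theorem pointwise_bound (y : EuclideanSpace ℝ (Fin d)) :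
    0 ≤ ouDensity q₀ t y * ∑ i, postCov q₀ t y i i ∧
    ouDensity q₀ t y * ∑ i, postCov q₀ t y i i ≤
      ∫ y₀, q₀ y₀ * ouKernel t y y₀ * ‖y₀ - Real.exp t • y‖ ^ 2 := by
  classical
  set K : ℝ := (2 * π * sigSq t) ^ (-(d : ℝ) / 2) with hK
  have hK0 : 0 ≤ K := by rw [hK]; positivity
  set A : EuclideanSpace ℝ (Fin d) → ℝ := fun y₀ => q₀ y₀ * ouKernel t y y₀ with hAdef
  have hAnn : ∀ y₀, 0 ≤ A y₀ := fun y₀ => mul_nonneg (hq0 _) (ouKernel_nonneg hs.le _ _)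
  have hAle : ∀ y₀, A y₀ ≤ K * q₀ y₀ := by
    intro y₀
    rw [hAdef]
    calc q₀ y₀ * ouKernel t y y₀ ≤ q₀ y₀ * K :=
          mul_le_mul_of_nonneg_left (ouKernel_le hs y y₀) (hq0 _)
      _ = K * q₀ y₀ := mul_comm _ _
  have hAmeas : Measurable A :=
    hmeas.mul ((continuous_ouKernel t).comp (continuous_const.prodMk continuous_id)).measurable
  -- integrability of A
  have int_A : Integrable A := by
    refine Integrable.mono' (hq_int.const_mul K) hAmeas.aestronglyMeasurable
      (Filter.Eventually.of_forall fun y₀ => ?_)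
    rw [Real.norm_eq_abs, abs_of_nonneg (hAnn y₀)]; exact hAle y₀
  -- integrability of A * ‖y₀‖²
  have int_Asq : Integrable (fun y₀ => A y₀ * ‖y₀‖ ^ 2) := by
    refine Integrable.mono' (hmom.const_mul K) (hAmeas.mul (by fun_prop)).aestronglyMeasurable
      (Filter.Eventually.of_forall fun y₀ => ?_)
    rw [Real.norm_eq_abs, abs_of_nonneg (mul_nonneg (hAnn y₀) (by positivity))]
    calc A y₀ * ‖y₀‖ ^ 2 ≤ (K * q₀ y₀) * ‖y₀‖ ^ 2 :=
          mul_le_mul_of_nonneg_right (hAle y₀) (by positivity)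
      _ = K * (q₀ y₀ * ‖y₀‖ ^ 2) := by ring
  -- integrability of A i j
  have int_Aij : ∀ i j : Fin d, Integrable (fun y₀ => A y₀ * (y₀ i * y₀ j)) := by
    intro i j
    refine Integrable.mono' int_Asq (hAmeas.mul (by fun_prop)).aestronglyMeasurable
      (Filter.Eventually.of_forall fun y₀ => ?_)
    rw [Real.norm_eq_abs, abs_mul]
    rw [abs_of_nonneg (hAnn y₀)]
    apply mul_le_mul_of_nonneg_left _ (hAnn y₀)
    rw [abs_mul]
    calc |y₀ i| * |y₀ j| ≤ ‖y₀‖ * ‖y₀‖ := by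
          apply mul_le_mul _ _ (abs_nonneg _) (norm_nonneg _)
          · nlinarith [coord_sq_le (x := y₀) i, abs_nonneg (y₀ i), norm_nonneg y₀, sq_abs (y₀ i)]
          · nlinarith [coord_sq_le (x := y₀) j, abs_nonneg (y₀ j), norm_nonneg y₀, sq_abs (y₀ j)]
      _ = ‖y₀‖ ^ 2 := by ring
  -- integrability of A • y₀
  have int_Av : Integrable (fun y₀ => A y₀ • y₀) := by
    refine Integrable.mono' ((hq_int.add hmom).const_mul K)
      (hAmeas.aestronglyMeasurable.smul aestronglyMeasurable_id)
      (Filter.Eventually.of_forall fun y₀ => ?_)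
    rw [norm_smul, Real.norm_eq_abs, abs_of_nonneg (hAnn y₀)]
    calc A y₀ * ‖y₀‖ ≤ (K * q₀ y₀) * ‖y₀‖ :=
          mul_le_mul_of_nonneg_right (hAle y₀) (norm_nonneg _)
      _ ≤ (K * q₀ y₀) * (1 + ‖y₀‖ ^ 2) := by
          apply mul_le_mul_of_nonneg_left _ (mul_nonneg hK0 (hq0 _))
          nlinarith [norm_nonneg y₀, sq_nonneg (‖y₀‖ - 1)]
      _ = K * (q₀ y₀ + q₀ y₀ * ‖y₀‖ ^ 2) := by ring
  -- integrability of A * ⟪u, y₀⟫ and A * ‖y₀ - u‖²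
  have int_Ainner : ∀ u : EuclideanSpace ℝ (Fin d), Integrable (fun y₀ => A y₀ * ⟪u, y₀⟫) := by
    intro u
    refine Integrable.mono' (((hq_int.add hmom).const_mul K).const_mul ‖u‖)
      (hAmeas.mul ((continuous_const.inner continuous_id).measurable)).aestronglyMeasurable
      (Filter.Eventually.of_forall fun y₀ => ?_)
    rw [Real.norm_eq_abs, abs_mul, abs_of_nonneg (hAnn y₀)]
    calc A y₀ * |⟪u, y₀⟫| ≤ (K * q₀ y₀) * (‖u‖ * ‖y₀‖) := by
          apply mul_le_mul (hAle y₀) _ (abs_nonneg _) (mul_nonneg hK0 (hq0 _))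
          exact (abs_real_inner_le_norm u y₀)
      _ ≤ (K * q₀ y₀) * (‖u‖ * (1 + ‖y₀‖ ^ 2)) := by
          apply mul_le_mul_of_nonneg_left _ (mul_nonneg hK0 (hq0 _))
          apply mul_le_mul_of_nonneg_left _ (norm_nonneg u)
          nlinarith [norm_nonneg y₀, sq_nonneg (‖y₀‖ - 1)]
      _ = ‖u‖ * (K * (q₀ y₀ + q₀ y₀ * ‖y₀‖ ^ 2)) := by ring
  have int_Ac : ∀ u : EuclideanSpace ℝ (Fin d),
      Integrable (fun y₀ => A y₀ * ‖y₀ - u‖ ^ 2) := by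
    intro u
    have e1 : ∀ y₀ : EuclideanSpace ℝ (Fin d), A y₀ * ‖y₀ - u‖ ^ 2
        = A y₀ * ‖y₀‖ ^ 2 - 2 * (A y₀ * ⟪u, y₀⟫) + ‖u‖ ^ 2 * A y₀ := by
      intro y₀
      rw [norm_sub_sq_real, real_inner_comm]
      ring
    refine ((int_Asq.sub ((int_Ainner u).const_mul 2)).add (int_A.const_mul (‖u‖^2))).congr
      (Filter.Eventually.of_forall fun y₀ => (e1 y₀).symm)
  -- expansion identity
  set ρ : ℝ := ouDensity q₀ t y with hρdef
  set v : EuclideanSpace ℝ (Fin d) := ∫ y₀, A y₀ • y₀ with hvdef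
  have hexpand : ∀ u : EuclideanSpace ℝ (Fin d),
      ∫ y₀, A y₀ * ‖y₀ - u‖ ^ 2
        = (∫ y₀, A y₀ * ‖y₀‖ ^ 2) - 2 * ⟪u, v⟫ + ρ * ‖u‖ ^ 2 := by
    intro u
    have e1 : ∀ y₀ : EuclideanSpace ℝ (Fin d), A y₀ * ‖y₀ - u‖ ^ 2
        = A y₀ * ‖y₀‖ ^ 2 - 2 * (A y₀ * ⟪u, y₀⟫) + ‖u‖ ^ 2 * A y₀ := by
      intro y₀
      rw [norm_sub_sq_real, real_inner_comm]
      ring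
    have hiv : ∫ y₀, A y₀ * ⟪u, y₀⟫ = ⟪u, v⟫ := by
      have h := ContinuousLinearMap.integral_comp_comm (innerSL ℝ u) int_Av
      simp only [innerSL_apply_apply] at h
      rw [← h]
      congr 1; funext y₀
      rw [real_inner_smul_right]
    calc ∫ y₀, A y₀ * ‖y₀ - u‖ ^ 2
        = ∫ y₀, (A y₀ * ‖y₀‖ ^ 2 - 2 * (A y₀ * ⟪u, y₀⟫) + ‖u‖ ^ 2 * A y₀) := by
          congr 1; funext y₀; exact e1 y₀
      _ = (∫ y₀, A y₀ * ‖y₀‖ ^ 2) - 2 * (∫ y₀, A y₀ * ⟪u, y₀⟫) + ‖u‖ ^ 2 * ∫ y₀, A y₀ := by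
          have h1 : Integrable (fun y₀ => A y₀ * ‖y₀‖ ^ 2 - 2 * (A y₀ * ⟪u, y₀⟫)) :=
            int_Asq.sub ((int_Ainner u).const_mul 2)
          have h2 : Integrable (fun y₀ => ‖u‖ ^ 2 * A y₀) := int_A.const_mul (‖u‖ ^ 2)
          rw [integral_add h1 h2, integral_sub int_Asq ((int_Ainner u).const_mul 2),
            integral_const_mul, integral_const_mul]
      _ = (∫ y₀, A y₀ * ‖y₀‖ ^ 2) - 2 * ⟪u, v⟫ + ρ * ‖u‖ ^ 2 := by
          rw [hiv]; rw [hρdef]; unfold ouDensity; ring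
  have hA' : ∀ y₀, q₀ y₀ * ouKernel t y y₀ = A y₀ := fun _ => rfl
  simp only [hA']
  have hρeq : ρ = ∫ y₀, A y₀ := rfl
  have hρ0 : 0 ≤ ρ := hρeq ▸ integral_nonneg hAnn
  by_cases hρz : ρ = 0
  · constructor
    · rw [hρz, zero_mul]
    · rw [hρz, zero_mul]
      exact integral_nonneg fun y₀ => mul_nonneg (hAnn _) (sq_nonneg _)
  · have hρpos : 0 < ρ := lt_of_le_of_ne hρ0 (Ne.symm hρz)
    set μ := postMean q₀ t y with hμ
    have hμdef : μ = ρ⁻¹ • v := rfl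
    have hvρμ : v = ρ • μ := by
      rw [hμdef, smul_smul, mul_inv_cancel₀ hρz, one_smul]
    set c : EuclideanSpace ℝ (Fin d) := Real.exp t • y with hcdef
    have htrace : ρ * ∑ i, postCov q₀ t y i i
        = (∫ y₀, A y₀ * ‖y₀‖ ^ 2) - ρ * ‖μ‖ ^ 2 := by
      unfold postCov
      simp only [hA', ← hμ]
      rw [Finset.sum_sub_distrib, ← Finset.mul_sum]
      have hsum : ∑ i : Fin d, ∫ y₀, A y₀ * (y₀ i * y₀ i) = ∫ y₀, A y₀ * ‖y₀‖ ^ 2 := by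
        rw [← integral_finset_sum _ (fun i _ => int_Aij i i)]
        congr 1; funext y₀
        rw [norm_sq_eq_sum, Finset.mul_sum]
      rw [hsum, ← norm_sq_eq_sum (x := μ)]
      rw [← hρdef]
      field_simp
    have hself : ∫ y₀, A y₀ * ‖y₀ - μ‖ ^ 2 = (∫ y₀, A y₀ * ‖y₀‖ ^ 2) - ρ * ‖μ‖ ^ 2 := by
      rw [hexpand μ, hvρμ, real_inner_smul_right, real_inner_self_eq_norm_sq]
      ring
    constructor
    · rw [htrace, ← hself]
      exact integral_nonneg fun y₀ => mul_nonneg (hAnn _) (sq_nonneg _)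
    · rw [htrace, hexpand c, hvρμ, real_inner_smul_right]
      nlinarith [norm_sub_sq_real c μ, mul_nonneg hρ0 (sq_nonneg (‖c - μ‖))]

end Pointwise

section Main

variable {q₀ : EuclideanSpace ℝ (Fin d) → ℝ} (hq0 : ∀ y, 0 ≤ q₀ y) (hmeas : Measurable q₀)
  (hq_int : Integrable q₀) (hprob : ∫ y, q₀ y = 1)
  (hmom : Integrable (fun y => q₀ y * ‖y‖ ^ 2)) {t : ℝ} (hs : 0 < sigSq t)

include hq0 hmeas hq_int hprob hmom hs in
lemma g_int_and_value :
    Integrable (fun y => ∫ y₀, q₀ y₀ * ouKernel t y y₀ * ‖y₀ - Real.exp t • y‖ ^ 2) ∧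
    (∫ y, ∫ y₀, q₀ y₀ * ouKernel t y y₀ * ‖y₀ - Real.exp t • y‖ ^ 2)
      = d * (Real.exp (2 * t) - 1) := by
  set F : EuclideanSpace ℝ (Fin d) × EuclideanSpace ℝ (Fin d) → ℝ :=
    fun p => q₀ p.2 * ouKernel t p.1 p.2 * ‖p.2 - Real.exp t • p.1‖ ^ 2 with hF
  have hFeq : ∀ p : EuclideanSpace ℝ (Fin d) × EuclideanSpace ℝ (Fin d),
      F p = Real.exp (2 * t) * q₀ p.2 * (ouKernel t p.1 p.2 * ‖p.1 - Real.exp (-t) • p.2‖ ^ 2) := by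
    intro p
    have h1 : p.2 - Real.exp t • p.1 = (-Real.exp t) • (p.1 - Real.exp (-t) • p.2) := by
      rw [smul_sub, smul_smul]
      have h0 : -Real.exp t * Real.exp (-t) = -1 := by
        rw [neg_mul, ← Real.exp_add]; simp
      rw [h0]
      simp only [neg_smul, one_smul]
      abel
    rw [hF]
    simp only [h1, norm_smul, Real.norm_eq_abs, abs_neg, abs_of_pos (Real.exp_pos t), mul_pow]
    have h2 : rexp t ^ 2 = rexp (2 * t) := by rw [sq, ← Real.exp_add]; ring_nf
    rw [h2]
    ring
  have hFnn : ∀ p, 0 ≤ F p := fun p =>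
    mul_nonneg (mul_nonneg (hq0 _) (ouKernel_nonneg hs.le _ _)) (sq_nonneg _)
  have hFmeas : AEStronglyMeasurable F (volume.prod volume) := by
    apply Measurable.aestronglyMeasurable
    apply Measurable.mul
    apply Measurable.mul (hmeas.comp measurable_snd) (continuous_ouKernel t).measurable
    fun_prop
  have hFint1 : ∀ y₀ : EuclideanSpace ℝ (Fin d),
      Integrable (fun y => F (y, y₀)) := by
    intro y₀
    refine ((kernel_moment_integrable hs y₀).const_mul (Real.exp (2*t) * q₀ y₀)).congr
      (Filter.Eventually.of_forall fun y => ?_)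
    show Real.exp (2*t) * q₀ y₀ * (ouKernel t y y₀ * ‖y - Real.exp (-t) • y₀‖ ^ 2) = F (y, y₀)
    rw [hFeq (y, y₀)]
  have hFival : ∀ y₀ : EuclideanSpace ℝ (Fin d),
      ∫ y, F (y, y₀) = Real.exp (2*t) * (d * sigSq t) * q₀ y₀ := by
    intro y₀
    have : ∫ y, F (y, y₀)
        = ∫ y, (Real.exp (2*t) * q₀ y₀) * (ouKernel t y y₀ * ‖y - Real.exp (-t) • y₀‖ ^ 2) := by
      congr 1; funext y; rw [hFeq (y, y₀)]
    rw [this, integral_const_mul]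
    have hkm : ∫ y, ouKernel t y y₀ * ‖y - Real.exp (-t) • y₀‖ ^ 2 = d * sigSq t :=
      kernel_moment hs y₀
    rw [hkm]
    ring
  have hFint : Integrable F (volume.prod volume) := by
    rw [integrable_prod_iff' hFmeas]
    constructor
    · exact Filter.Eventually.of_forall hFint1
    · refine ((hq_int.const_mul (Real.exp (2*t) * (d * sigSq t))).congr
        (Filter.Eventually.of_forall fun y₀ => ?_))
      show Real.exp (2*t) * (↑d * sigSq t) * q₀ y₀ = ∫ y, ‖F (y, y₀)‖
      rw [← hFival y₀]
      congr 1; funext y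
      rw [Real.norm_eq_abs, abs_of_nonneg (hFnn _)]
  have hswap := integral_integral_swap (f := fun y y₀ => F (y, y₀))
    (μ := (volume : Measure (EuclideanSpace ℝ (Fin d))))
    (ν := (volume : Measure (EuclideanSpace ℝ (Fin d)))) hFint
  constructor
  · exact hFint.integral_prod_left
  · show ∫ y, ∫ y₀, F (y, y₀) = _
    rw [hswap]
    have : ∫ y₀, ∫ y, F (y, y₀) = ∫ y₀, Real.exp (2*t) * (d * sigSq t) * q₀ y₀ := by
      congr 1; funext y₀; exact hFival y₀
    rw [this, integral_const_mul, hprob, mul_one]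
    unfold sigSq
    have h3 : rexp (2 * t) * rexp (-2 * t) = 1 := by
      rw [← Real.exp_add]; norm_num
    nlinarith [h3]

end Main

/-- Posterior trace bound near time zero for the OU process: with `Σ_t` the
posterior covariance `Cov(y₀ | y_t)`, for every `t ≥ 0` one has
`E[Tr Σ_t] ≤ d (e^{2t} − 1)`; in particular, for `t ∈ [0,1]`, `E[Tr Σ_t] ≤ 2 d e² t`. -/
theorem posterior_trace_bound
    (q₀ : EuclideanSpace ℝ (Fin d) → ℝ)
    (hq0 : ∀ y, 0 ≤ q₀ y) (hmeas : Measurable q₀)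
    (hprob : ∫ y, q₀ y = 1)
    (hmom : Integrable (fun y => q₀ y * ‖y‖ ^ 2)) :
    (∀ t : ℝ, 0 ≤ t →
      ∫ y, ouDensity q₀ t y * ∑ i, postCov q₀ t y i i ≤ d * (Real.exp (2 * t) - 1))
    ∧ ∀ t : ℝ, t ∈ Set.Icc (0 : ℝ) 1 →
      ∫ y, ouDensity q₀ t y * ∑ i, postCov q₀ t y i i ≤ 2 * d * Real.exp 2 * t := by
  have hq_int : Integrable q₀ := by
    by_contra hnot
    rw [integral_undef hnot] at hprob
    exact one_ne_zero hprob.symm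
  have part1 : ∀ t : ℝ, 0 ≤ t →
      ∫ y, ouDensity q₀ t y * ∑ i, postCov q₀ t y i i ≤ d * (Real.exp (2 * t) - 1) := by
    intro t ht
    rcases ht.eq_or_lt with h0 | hpos
    · -- t = 0
      subst h0
      have hz : ∀ y : EuclideanSpace ℝ (Fin d),
          ouDensity q₀ 0 y * ∑ i, postCov q₀ 0 y i i = 0 := by
        intro y
        by_cases hd : d = 0
        · subst hd; simp
        · have hk : ∀ y' y₀ : EuclideanSpace ℝ (Fin d), ouKernel 0 y' y₀ = 0 := by
            intro y' y₀
            unfold ouKernel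
            have hb : 2 * π * sigSq 0 = 0 := by
              unfold sigSq; norm_num
            rw [hb, Real.zero_rpow]
            · ring
            · intro hcon
              field_simp at hcon
              exact hd (by simpa using hcon)
          have hρ : ouDensity q₀ 0 y = 0 := by
            unfold ouDensity; simp [hk]
          rw [hρ, zero_mul]
      calc ∫ y, ouDensity q₀ 0 y * ∑ i, postCov q₀ 0 y i i
          = ∫ _y : EuclideanSpace ℝ (Fin d), (0:ℝ) := by congr 1; funext y; exact hz y
        _ = 0 := integral_zero _ _
        _ ≤ d * (Real.exp (2 * 0) - 1) := by norm_num
    · -- t > 0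
      have hs : 0 < sigSq t := sigSq_pos hpos
      obtain ⟨hgint, hgval⟩ := g_int_and_value hq0 hmeas hq_int hprob hmom hs
      rw [← hgval]
      apply integral_mono_of_nonneg
      · exact Filter.Eventually.of_forall fun y =>
          (pointwise_bound hq0 hmeas hq_int hmom hs y).1
      · exact hgint
      · exact Filter.Eventually.of_forall fun y =>
          (pointwise_bound hq0 hmeas hq_int hmom hs y).2
  refine ⟨part1, fun t ht => ?_⟩
  obtain ⟨ht0, ht1⟩ := ht
  refine le_trans (part1 t ht0) ?_
  have key : Real.exp (2*t) - 1 ≤ 2 * Real.exp 2 * t := by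
    have ha : 1 + (-2*t) ≤ rexp (-2*t) := by
      have := Real.add_one_le_exp (-2*t); linarith
    have hb : rexp (2*t) * rexp (-2*t) = 1 := by
      rw [← Real.exp_add]; norm_num
    have hc : rexp (2*t) ≤ rexp 2 := Real.exp_le_exp.2 (by linarith)
    nlinarith [Real.exp_pos (2*t)]
  calc (d : ℝ) * (Real.exp (2 * t) - 1) ≤ (d : ℝ) * (2 * Real.exp 2 * t) :=
        mul_le_mul_of_nonneg_left key (Nat.cast_nonneg d)
    _ = 2 * d * Real.exp 2 * t := by ring

end
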